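/- Let A ∈ ℝ^{n×n} with n ≥ 3. Then A^{[n−1]} is Metzler if and only if a_{ij} ≥ 0 for all i ≠ j with i−j odd, and a_{ij} ≤ 0 for all i ≠ j with i−j even. -/

import Mathlib

open Matrix

/-- The `k`-multiplicative compound of a matrix: the matrix of all `k × k` minors,
indexed by the `k`-element subsets of the row and column index sets (ordered
increasingly / lexicographically). -/
noncomputable def mulCompound {𝕜 : Type*} [CommRing 𝕜] {n m : ℕ}
    (A : Matrix (Fin n) (Fin m) 𝕜) (k : ℕ) :
    Matrix {s : Finset (Fin n) // s.card = k} {t : Finset (Fin m) // t.card = k} 𝕜 :=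
  fun α β => (A.submatrix (α.1.orderEmbOfFin α.2) (β.1.orderEmbOfFin β.2)).det

/-- The `k`-additive compound: `A^{[k]} := (d/dε) (I + ε A)^{(k)} |_{ε = 0}`. -/
noncomputable def addCompound {𝕜 : Type*} [NontriviallyNormedField 𝕜] {n : ℕ}
    (A : Matrix (Fin n) (Fin n) 𝕜) (k : ℕ) :
    Matrix {s : Finset (Fin n) // s.card = k} {s : Finset (Fin n) // s.card = k} 𝕜 :=
  fun α β => deriv (fun ε : 𝕜 => mulCompound (1 + ε • A) k α β) 0

/-- A square matrix is Metzler if all its off-diagonal entries are nonnegative. -/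
def IsMetzler {ι : Type*} (B : Matrix ι ι ℝ) : Prop :=
  ∀ i j, i ≠ j → 0 ≤ B i j

lemma piecewise_det_eq {k : ℕ} (B C : Matrix (Fin k) (Fin k) ℝ) (ε : ℝ) :
    (B + ε • C).det = ∑ s : Finset (Fin k),
      ε ^ s.card * (Matrix.of (s.piecewise C B)).det := by
  classical
  have h0 : (B + ε • C).det
      = (detRowAlternating : (Fin k → ℝ) [⋀^Fin k]→ₗ[ℝ] ℝ) ((ε • C : Matrix _ _ ℝ) + B) := by
    rw [add_comm]; rfl
  rw [h0]
  rw [show (detRowAlternating ((ε • C : Matrix (Fin k) (Fin k) ℝ) + B) : ℝ)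
      = (detRowAlternating : (Fin k → ℝ) [⋀^Fin k]→ₗ[ℝ] ℝ).toMultilinearMap
        ((fun i => (ε • C : Matrix (Fin k) (Fin k) ℝ) i) + (fun i => B i)) from rfl,
    MultilinearMap.map_add_univ]
  refine Finset.sum_congr rfl fun s _ => ?_
  have h1 : (s.piecewise (ε • C : Matrix (Fin k) (Fin k) ℝ) B)
      = s.piecewise (fun i => ε • (s.piecewise C B) i) (s.piecewise C B) := by
    funext i
    by_cases hi : i ∈ s <;> simp [Finset.piecewise, hi] <;> rfl
  calc (detRowAlternating : (Fin k → ℝ) [⋀^Fin k]→ₗ[ℝ] ℝ).toMultilinearMap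
        (s.piecewise (ε • C : Matrix (Fin k) (Fin k) ℝ) B)
      = (∏ _i ∈ s, ε) • (detRowAlternating : (Fin k → ℝ) [⋀^Fin k]→ₗ[ℝ] ℝ).toMultilinearMap
          (s.piecewise C B) := by
        rw [h1]; exact MultilinearMap.map_piecewise_smul _ _ _ _
    _ = ε ^ s.card * (Matrix.of (s.piecewise C B)).det := by
        rw [Finset.prod_const, smul_eq_mul]; rfl

lemma hasDerivAt_det_add_smul {k : ℕ} (B C : Matrix (Fin k) (Fin k) ℝ) :
    HasDerivAt (fun ε : ℝ => (B + ε • C).det)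
      (∑ i, (B.updateRow i (C i)).det) 0 := by
  classical
  simp only [piecewise_det_eq]
  have key : HasDerivAt
      (fun ε : ℝ => ∑ s : Finset (Fin k),
        ε ^ s.card * (Matrix.of (s.piecewise C B)).det)
      (∑ s : Finset (Fin k), (if s.card = 1 then
        (Matrix.of (s.piecewise C B)).det else 0)) 0 := by
    refine HasDerivAt.fun_sum fun s _ => ?_
    have h := (hasDerivAt_pow s.card (0:ℝ)).mul_const
      (Matrix.of (s.piecewise C B)).det
    convert h using 1
    rfl
    rcases hc : s.card with _ | c
    · simp
    · rcases c with _ | c <;> simp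
  convert key using 1
  rw [← Finset.sum_filter]
  have himg : (Finset.univ.filter (fun s : Finset (Fin k) => s.card = 1))
      = Finset.univ.image (fun i : Fin k => ({i} : Finset (Fin k))) := by
    ext s
    simp only [Finset.mem_filter, Finset.mem_univ, true_and, Finset.mem_image]
    rw [Finset.card_eq_one]
    tauto
  rw [himg, Finset.sum_image (by intro a _ b _ h; simpa using h)]
  refine Finset.sum_congr rfl fun i _ => ?_
  congr 1
  funext j
  change _ = Finset.piecewise {i} C B j
  by_cases hj : j = i
  · subst hj; simp [Finset.piecewise]
  · simp [Finset.piecewise, hj, Matrix.updateRow_ne hj]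

lemma det_updateRow_sum'' {p : ℕ} (B : Matrix (Fin p) (Fin p) ℝ) (m : Fin p)
    (c : Fin p → ℝ) (v : Fin p → Fin p → ℝ) (s : Finset (Fin p)) :
    (B.updateRow m (∑ j ∈ s, c j • v j)).det = ∑ j ∈ s, c j * (B.updateRow m (v j)).det := by
  classical
  induction s using Finset.induction_on with
  | empty =>
      simp only [Finset.sum_empty]
      exact Matrix.det_eq_zero_of_row_eq_zero m (fun j => by simp)
  | @insert a s ha ih =>
      rw [Finset.sum_insert ha, Finset.sum_insert ha, Matrix.det_updateRow_add,
        Matrix.det_updateRow_smul, ih]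

lemma detN {p : ℕ} (A : Matrix (Fin p) (Fin p) ℝ) (ℓ m : Fin p) (hlm : ℓ ≠ m) :
    (updateRow (updateRow (1 : Matrix (Fin p) (Fin p) ℝ) ℓ (Pi.single m 1)) m (A m)).det
      = -(A m ℓ) := by
  classical
  set B := updateRow (1 : Matrix (Fin p) (Fin p) ℝ) ℓ (Pi.single m 1) with hB
  have hv : A m = ∑ j, A m j • (Pi.single j 1 : Fin p → ℝ) := by
    funext x
    rw [Finset.sum_apply]
    simp [Pi.single_apply]
  have hrw : B.updateRow m (A m)
      = B.updateRow m (∑ j, A m j • (Pi.single j 1 : Fin p → ℝ)) := by rw [← hv]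
  rw [hrw, det_updateRow_sum'']
  rw [Finset.sum_eq_single ℓ]
  · have hswap : B.updateRow m (Pi.single ℓ 1) = (Equiv.swap ℓ m).permMatrix ℝ := by
      ext i j
      rcases eq_or_ne i m with rfl | him
      · simp [Equiv.Perm.permMatrix, PEquiv.toMatrix_apply, Equiv.toPEquiv_apply,
          Equiv.swap_apply_right, Pi.single_apply, eq_comm]
      · rw [Matrix.updateRow_ne him]
        rcases eq_or_ne i ℓ with rfl | hil
        · simp [hB, Equiv.Perm.permMatrix, PEquiv.toMatrix_apply, Equiv.toPEquiv_apply,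
            Equiv.swap_apply_left, Pi.single_apply, eq_comm]
        · rw [hB, Matrix.updateRow_ne hil]
          simp [Equiv.Perm.permMatrix, PEquiv.toMatrix_apply, Equiv.toPEquiv_apply,
            Equiv.swap_apply_of_ne_of_ne hil him, Matrix.one_apply, eq_comm]
    rw [hswap, Matrix.det_permutation, Equiv.Perm.sign_swap hlm]
    simp [mul_comm]
  · intro j _ hj
    by_cases hjm : j = m
    · have h2 : (B.updateRow m (Pi.single j 1)) ℓ = (B.updateRow m (Pi.single j 1)) m := by
        rw [Matrix.updateRow_ne hlm, Matrix.updateRow_self, hB, Matrix.updateRow_self, hjm]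
      rw [Matrix.det_zero_of_row_eq hlm h2, mul_zero]
    · have h2 : (B.updateRow m (Pi.single j 1)) j = (B.updateRow m (Pi.single j 1)) m := by
        rw [Matrix.updateRow_ne hjm, Matrix.updateRow_self, hB, Matrix.updateRow_ne hj]
        funext x
        simp [Matrix.one_apply, Pi.single_apply, eq_comm]
      rw [Matrix.det_zero_of_row_eq hjm h2, mul_zero]
  · simp

lemma orderEmb_compl {k : ℕ} (ℓ : Fin (k+3)) (h : ({ℓ}ᶜ : Finset (Fin (k+3))).card = (k+3)-1) :
    ∀ x : Fin (k+2), (({ℓ}ᶜ : Finset (Fin (k+3))).orderEmbOfFin h) x = ℓ.succAbove x := by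
  have := Finset.orderEmbOfFin_unique h (f := ℓ.succAbove)
    (fun x => by simp [Fin.succAbove_ne]) (Fin.strictMono_succAbove ℓ)
  exact fun x => (congrFun this x).symm

lemma addCompound_entry {k : ℕ} (A : Matrix (Fin (k+3)) (Fin (k+3)) ℝ) (ℓ m : Fin (k+3))
    (hlm : ℓ ≠ m) (hl : ({ℓ}ᶜ : Finset (Fin (k+3))).card = (k+3)-1)
    (hm : ({m}ᶜ : Finset (Fin (k+3))).card = (k+3)-1) :
    addCompound A ((k+3)-1) ⟨{ℓ}ᶜ, hl⟩ ⟨{m}ᶜ, hm⟩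
      = (-1:ℝ)^((ℓ:ℕ)+(m:ℕ)+1) * A m ℓ := by
  classical
  obtain ⟨r, hr⟩ := Fin.exists_succAbove_eq (show m ≠ ℓ from Ne.symm hlm)
  set SI : Matrix (Fin (k+2)) (Fin (k+2)) ℝ :=
    (1 : Matrix (Fin (k+3)) (Fin (k+3)) ℝ).submatrix ℓ.succAbove m.succAbove with hSI
  set SA : Matrix (Fin (k+2)) (Fin (k+2)) ℝ :=
    A.submatrix ℓ.succAbove m.succAbove with hSA
  have hsub : ∀ ε : ℝ, mulCompound (1 + ε • A) ((k+3)-1) ⟨{ℓ}ᶜ, hl⟩ ⟨{m}ᶜ, hm⟩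
      = (SI + ε • SA).det := by
    intro ε
    unfold mulCompound
    congr 1
    ext i j
    simp only [Matrix.submatrix_apply, Matrix.add_apply, Matrix.smul_apply]
    rw [orderEmb_compl ℓ hl, orderEmb_compl m hm]
    rfl
  unfold addCompound
  simp only [hsub]
  rw [(hasDerivAt_det_add_smul SI SA).deriv]
  rw [Finset.sum_eq_single r]
  · set N : Matrix (Fin (k+3)) (Fin (k+3)) ℝ :=
      updateRow (updateRow (1 : Matrix (Fin (k+3)) (Fin (k+3)) ℝ) ℓ (Pi.single m 1)) m (A m)
      with hN
    have hMN : N.submatrix ℓ.succAbove m.succAbove = SI.updateRow r (SA r) := by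
      ext i j
      by_cases hir : i = r
      · subst hir
        rw [Matrix.updateRow_self]
        simp only [Matrix.submatrix_apply, hr, hN, hSA]
        rw [Matrix.updateRow_self]
      · rw [Matrix.updateRow_ne hir]
        have h1 : ℓ.succAbove i ≠ m := fun h =>
          hir ((Fin.strictMono_succAbove ℓ).injective (h.trans hr.symm))
        have h2 : ℓ.succAbove i ≠ ℓ := Fin.succAbove_ne ℓ i
        simp only [Matrix.submatrix_apply, hN, hSI]
        rw [Matrix.updateRow_ne h1, Matrix.updateRow_ne h2]
    have hrowN : N ℓ = Pi.single m 1 := by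
      rw [hN, Matrix.updateRow_ne hlm, Matrix.updateRow_self]
    have hexp : N.det = (-1:ℝ)^((ℓ:ℕ)+(m:ℕ)) * (N.submatrix ℓ.succAbove m.succAbove).det := by
      rw [Matrix.det_succ_row N ℓ]
      rw [Finset.sum_eq_single m]
      · rw [hrowN]
        simp
      · intro j _ hj
        rw [hrowN]
        simp [Pi.single_apply, hj]
      · simp
    have hdN : N.det = -(A m ℓ) := detN A ℓ m hlm
    have hkey := hexp.symm.trans hdN
    rw [hMN] at hkey
    have hsq : (-1:ℝ)^((ℓ:ℕ)+(m:ℕ)) * ((-1:ℝ)^((ℓ:ℕ)+(m:ℕ))) = 1 := by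
      rw [← pow_add]
      exact Even.neg_one_pow ⟨(ℓ:ℕ)+(m:ℕ), by ring⟩
    calc (SI.updateRow r (SA r)).det
        = ((-1:ℝ)^((ℓ:ℕ)+(m:ℕ)) * (-1:ℝ)^((ℓ:ℕ)+(m:ℕ))) * (SI.updateRow r (SA r)).det := by
          rw [hsq, one_mul]
      _ = (-1:ℝ)^((ℓ:ℕ)+(m:ℕ)) * ((-1:ℝ)^((ℓ:ℕ)+(m:ℕ)) * (SI.updateRow r (SA r)).det) := by
          ring
      _ = (-1:ℝ)^((ℓ:ℕ)+(m:ℕ)) * (-(A m ℓ)) := by rw [hkey]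
      _ = (-1:ℝ)^((ℓ:ℕ)+(m:ℕ)+1) * A m ℓ := by rw [pow_succ]; ring
  · intro i _ hi
    refine Matrix.det_eq_zero_of_row_eq_zero r (fun j => ?_)
    rw [Matrix.updateRow_ne (Ne.symm hi)]
    simp only [hSI, Matrix.submatrix_apply]
    rw [hr]
    exact Matrix.one_apply_ne (Fin.ne_succAbove m j)
  · simp

lemma dist_mod_two (a b : ℕ) : Nat.dist a b % 2 = (a + b) % 2 := by
  unfold Nat.dist
  omega

/-- `A^{[n-1]}` is Metzler iff `a_{ij} ≥ 0` for all `i ≠ j` with `i - j` odd, and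
`a_{ij} ≤ 0` for all `i ≠ j` with `i - j` even. -/
theorem addCompound_metzler_nsub1 {n : ℕ} (hn : 3 ≤ n) (A : Matrix (Fin n) (Fin n) ℝ) :
    IsMetzler (addCompound A (n - 1)) ↔
      ((∀ i j : Fin n, i ≠ j → Odd (Nat.dist i j) → 0 ≤ A i j) ∧
        (∀ i j : Fin n, i ≠ j → Even (Nat.dist i j) → A i j ≤ 0)) := by
  obtain ⟨k, rfl⟩ : ∃ k, n = k + 3 := ⟨n - 3, by omega⟩
  have hcard : ∀ ℓ : Fin (k+3), ({ℓ}ᶜ : Finset (Fin (k+3))).card = (k+3)-1 := fun ℓ => by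
    simp [Finset.card_compl]
  constructor
  · intro h
    have key : ∀ i j : Fin (k+3), i ≠ j → 0 ≤ (-1:ℝ)^((j:ℕ)+(i:ℕ)+1) * A i j := by
      intro i j hij
      have hne : (⟨{j}ᶜ, hcard j⟩ : {s : Finset (Fin (k+3)) // s.card = (k+3)-1})
          ≠ ⟨{i}ᶜ, hcard i⟩ := by
        intro hc
        apply hij
        have h2 := congrArg Subtype.val hc
        simp only [compl_inj_iff, Finset.singleton_inj] at h2
        exact h2.symm
      have h3 := h _ _ hne
      rwa [addCompound_entry A j i (Ne.symm hij) (hcard j) (hcard i)] at h3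
    constructor
    · intro i j hij hodd
      have h4 := key i j hij
      have hpar : Even ((j:ℕ)+(i:ℕ)+1) := by
        rw [Nat.odd_iff] at hodd
        have hd := dist_mod_two (i:ℕ) (j:ℕ)
        rw [Nat.even_iff]
        omega
      rwa [Even.neg_one_pow hpar, one_mul] at h4
    · intro i j hij heven
      have h4 := key i j hij
      have hpar : Odd ((j:ℕ)+(i:ℕ)+1) := by
        rw [Nat.even_iff] at heven
        have hd := dist_mod_two (i:ℕ) (j:ℕ)
        rw [Nat.odd_iff]
        omega
      rw [Odd.neg_one_pow hpar] at h4
      linarith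
  · rintro ⟨h1, h2⟩ α β hab
    obtain ⟨ℓ, hℓ⟩ : ∃ ℓ, α.1 = {ℓ}ᶜ := by
      have hc1 : (α.1ᶜ).card = 1 := by
        rw [Finset.card_compl, α.2]
        simp
      obtain ⟨ℓ, hℓ⟩ := Finset.card_eq_one.1 hc1
      exact ⟨ℓ, by rw [← compl_compl α.1, hℓ]⟩
    obtain ⟨m, hm⟩ : ∃ m, β.1 = {m}ᶜ := by
      have hc1 : (β.1ᶜ).card = 1 := by
        rw [Finset.card_compl, β.2]
        simp
      obtain ⟨m, hm⟩ := Finset.card_eq_one.1 hc1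
      exact ⟨m, by rw [← compl_compl β.1, hm]⟩
    have hαeq : α = ⟨{ℓ}ᶜ, hcard ℓ⟩ := Subtype.ext hℓ
    have hβeq : β = ⟨{m}ᶜ, hcard m⟩ := Subtype.ext hm
    have hlm : ℓ ≠ m := by
      rintro rfl
      exact hab (hαeq.trans hβeq.symm)
    rw [hαeq, hβeq, addCompound_entry A ℓ m hlm (hcard ℓ) (hcard m)]
    rcases Nat.even_or_odd (Nat.dist (m:ℕ) (ℓ:ℕ)) with he | ho
    · have h5 := h2 m ℓ (Ne.symm hlm) he
      have hpar : Odd ((ℓ:ℕ)+(m:ℕ)+1) := by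
        rw [Nat.even_iff] at he
        have hd := dist_mod_two (m:ℕ) (ℓ:ℕ)
        rw [Nat.odd_iff]
        omega
      rw [Odd.neg_one_pow hpar]
      linarith
    · have h5 := h1 m ℓ (Ne.symm hlm) ho
      have hpar : Even ((ℓ:ℕ)+(m:ℕ)+1) := by
        rw [Nat.odd_iff] at ho
        have hd := dist_mod_two (m:ℕ) (ℓ:ℕ)
        rw [Nat.even_iff]
        omega
      rw [Even.neg_one_pow hpar, one_mul]
      exact h5
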